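/- In the Richardson pattern setup, fix k with 0 ≤ k ≤ N−2I. For any two distinct strictly increasing k-tuples i ≠ i' with entries in {I+1,…,N−I}, the supports of det(A_i) and det(A_{i'}) (their sets of monomials with nonzero coefficient, as multivariate polynomials) are disjoint. Consequently m_{k+I} = Σ_i det(A_i) is zero if and only if det(A_i) = 0 for every such tuple i. -/

import Mathlib

open scoped Classical

noncomputable section

/-- `Stau N τ a b` encodes `(a,b) ∈ S_τ`: `1 ≤ a < b ≤ N` and every `t` with
`a ≤ t ≤ b − 1` lies in `τ`. -/
def Stau (N : ℕ) (τ : Finset ℕ) (a b : ℕ) : Prop :=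
  1 ≤ a ∧ a < b ∧ b ≤ N ∧ ∀ t : ℕ, a ≤ t → t ≤ b - 1 → t ∈ τ

/-- The generic coordinate `x(a,b)`: the indeterminate `X (a,b)` if `(a,b) ∉ S_τ`,
and `0` if `(a,b) ∈ S_τ`. -/
def xcoord (N : ℕ) (τ : Finset ℕ) (a b : ℕ) : MvPolynomial (ℕ × ℕ) ℂ :=
  if Stau N τ a b then 0 else MvPolynomial.X (a, b)

/-- Row labels `1, …, I, i_1, …, i_k` of the matrix `A_i`. -/
def rowLabel (I k : ℕ) (i : Fin k → ℕ) (p : Fin (k + I)) : ℕ :=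
  if h : (p : ℕ) < I then (p : ℕ) + 1
  else i ⟨(p : ℕ) - I, by have := p.isLt; omega⟩

/-- Column labels `i_1, …, i_k, N−I+1, …, N` of the matrix `A_i`. -/
def colLabel (N I k : ℕ) (i : Fin k → ℕ) (q : Fin (k + I)) : ℕ :=
  if h : (q : ℕ) < k then i ⟨(q : ℕ), h⟩ else N - I + 1 + ((q : ℕ) - k)

/-- The `(k+I) × (k+I)` matrix `A_i` attached to a strictly increasing `k`-tuple `i`:
its `(p,q)` entry is `x(r_p, c_q)` if `r_p < c_q` and `0` otherwise. -/
def Amat (N I k : ℕ) (τ : Finset ℕ) (i : Fin k → ℕ) :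
    Matrix (Fin (k + I)) (Fin (k + I)) (MvPolynomial (ℕ × ℕ) ℂ) :=
  Matrix.of fun p q =>
    if rowLabel I k i p < colLabel N I k i q then
      xcoord N τ (rowLabel I k i p) (colLabel N I k i q)
    else 0

/-- The finite set of strictly increasing `k`-tuples with entries in `{I+1,…,N−I}`. -/
def tupleSet (N I k : ℕ) : Finset (Fin k → Fin (N + 1)) :=
  Finset.univ.filter fun i =>
    StrictMono i ∧ ∀ t, I + 1 ≤ (i t : ℕ) ∧ (i t : ℕ) ≤ N - I

/-- `m_{k+I} = Σ_i det (A_i)`, the sum over all strictly increasing `k`-tuples `i`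
with entries in `{I+1,…,N−I}`. -/
def mPoly (N I k : ℕ) (τ : Finset ℕ) : MvPolynomial (ℕ × ℕ) ℂ :=
  ∑ i ∈ tupleSet N I k, (Amat N I k τ fun t => ((i t : ℕ))).det


open MvPolynomial in
lemma prod_X_eq_monomial' {α : Type*} (s : Finset α) (v : α → ℕ × ℕ) :
    (∏ p ∈ s, (X (v p) : MvPolynomial (ℕ × ℕ) ℂ)) =
      monomial (∑ p ∈ s, Finsupp.single (v p) 1) 1 := by
  classical
  induction s using Finset.cons_induction with
  | empty => simp [monomial_zero']
  | cons a s ha ih =>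
      rw [Finset.prod_cons, Finset.sum_cons, ih, X, monomial_mul, one_mul]

open MvPolynomial in
lemma det_support_subset {n : ℕ} (M : Matrix (Fin n) (Fin n) (MvPolynomial (ℕ × ℕ) ℂ))
    (r c : Fin n → ℕ)
    (hM : ∀ p q, M p q = 0 ∨ M p q = X (r p, c q)) {d : (ℕ × ℕ) →₀ ℕ}
    (hd : d ∈ M.det.support) :
    ∃ σ : Equiv.Perm (Fin n), d = ∑ p : Fin n, Finsupp.single (r (σ p), c p) 1 := by
  classical
  rw [Matrix.det_apply] at hd
  obtain ⟨σ, -, hσ⟩ := Finset.mem_biUnion.mp (MvPolynomial.support_sum hd)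
  refine ⟨σ, ?_⟩
  rw [Units.smul_def] at hσ
  have hσ' := MvPolynomial.support_smul hσ
  by_cases hz : ∀ p : Fin n, M (σ p) p = X (r (σ p), c p)
  · rw [Finset.prod_congr rfl (fun p _ => hz p), prod_X_eq_monomial'] at hσ'
    rw [support_monomial, if_neg one_ne_zero] at hσ'
    simpa using hσ'
  · push_neg at hz
    obtain ⟨p, hp⟩ := hz
    have h0 : M (σ p) p = 0 := (hM _ _).resolve_right hp
    rw [show (∏ i : Fin n, M (σ i) i) = 0 from Finset.prod_eq_zero (Finset.mem_univ p) h0] at hσ'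
    simp at hσ'

lemma support_fst {n : ℕ} (r c : Fin n → ℕ) (σ : Equiv.Perm (Fin n)) (a : ℕ) :
    (∃ b, (a, b) ∈ (∑ p : Fin n, Finsupp.single (r (σ p), c p) 1 : (ℕ × ℕ) →₀ ℕ).support)
      ↔ ∃ p, r p = a := by
  constructor
  · rintro ⟨b, hb⟩
    rw [Finsupp.mem_support_iff, Finsupp.finset_sum_apply] at hb
    obtain ⟨p, -, hp⟩ := Finset.exists_ne_zero_of_sum_ne_zero hb
    rw [Finsupp.single_apply] at hp
    refine ⟨σ p, ?_⟩
    by_contra h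
    apply hp
    rw [if_neg]
    intro h'
    exact h (congrArg Prod.fst h')
  · rintro ⟨p, hp⟩
    refine ⟨c (σ⁻¹ p), ?_⟩
    rw [Finsupp.mem_support_iff, Finsupp.finset_sum_apply]
    intro h
    rw [Finset.sum_eq_zero_iff] at h
    have h2 := h (σ⁻¹ p) (Finset.mem_univ _)
    rw [show σ (σ⁻¹ p) = p from σ.apply_symm_apply p, hp, Finsupp.single_apply, if_pos rfl] at h2
    exact one_ne_zero h2

lemma rowLabel_exists_iff {I k : ℕ} (i : Fin k → ℕ) (hi : ∀ t, I + 1 ≤ i t) {a : ℕ}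
    (ha : I < a) :
    (∃ p : Fin (k + I), rowLabel I k i p = a) ↔ a ∈ Set.range i := by
  constructor
  · rintro ⟨p, hp⟩
    unfold rowLabel at hp
    split at hp
    · omega
    · exact ⟨_, hp⟩
  · rintro ⟨t, rfl⟩
    refine ⟨⟨(t : ℕ) + I, by have := t.isLt; omega⟩, ?_⟩
    unfold rowLabel
    rw [dif_neg (by simp)]
    congr 1
    exact Fin.ext (by simp)

open MvPolynomial in
lemma Amat_entry (N I k : ℕ) (τ : Finset ℕ) (i : Fin k → ℕ) (p q : Fin (k + I)) :
    Amat N I k τ i p q = 0 ∨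
      Amat N I k τ i p q = X (rowLabel I k i p, colLabel N I k i q) := by
  unfold Amat xcoord
  dsimp only [Matrix.of_apply]
  split
  · split
    · exact Or.inl rfl
    · exact Or.inr rfl
  · exact Or.inl rfl

/-- in the Richardson pattern setup, the determinants `det (A_i)` for
distinct strictly increasing `k`-tuples `i` have disjoint supports (no monomial
cancellation); consequently `m_{k+I} = 0` iff every `det (A_i) = 0`. -/
theorem support_disjoint_and_mPoly_eq_zero_iff
    (N I : ℕ) (hI : 1 ≤ I) (hNI : 2 * I ≤ N) (τ : Finset ℕ)
    (hτsub : ∀ t ∈ τ, 1 ≤ t ∧ t ≤ N - 1)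
    (hτ1 : ∀ t : ℕ, 1 ≤ t → t ≤ I - 1 → t ∈ τ) (hτ2 : I ∉ τ)
    (hτ3 : ∀ t : ℕ, N - I + 1 ≤ t → t ≤ N - 1 → t ∈ τ) (hτ4 : N - I ∉ τ)
    (k : ℕ) (hk : k ≤ N - 2 * I) :
    (∀ i i' : Fin k → ℕ,
      StrictMono i → (∀ t, I + 1 ≤ i t ∧ i t ≤ N - I) →
      StrictMono i' → (∀ t, I + 1 ≤ i' t ∧ i' t ≤ N - I) →
      i ≠ i' →
      Disjoint (Amat N I k τ i).det.support (Amat N I k τ i').det.support) ∧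
    (mPoly N I k τ = 0 ↔
      ∀ i : Fin k → ℕ, StrictMono i → (∀ t, I + 1 ≤ i t ∧ i t ≤ N - I) →
        (Amat N I k τ i).det = 0) := by
  classical
  have main : ∀ i i' : Fin k → ℕ,
      StrictMono i → (∀ t, I + 1 ≤ i t ∧ i t ≤ N - I) →
      StrictMono i' → (∀ t, I + 1 ≤ i' t ∧ i' t ≤ N - I) →
      i ≠ i' →
      Disjoint (Amat N I k τ i).det.support (Amat N I k τ i').det.support := by
    intro i i' hi hib hi' hib' hne
    rw [Finset.disjoint_left]
    intro d hd hd'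
    obtain ⟨σ, hds⟩ := det_support_subset _ (rowLabel I k i) (colLabel N I k i)
      (Amat_entry N I k τ i) hd
    obtain ⟨σ', hds'⟩ := det_support_subset _ (rowLabel I k i') (colLabel N I k i')
      (Amat_entry N I k τ i') hd'
    apply hne
    haveI : WellFoundedLT (Fin k) := inferInstance
    apply Set.range_injOn_strictMono hi hi'
    ext a
    by_cases ha : I < a
    · rw [← rowLabel_exists_iff i (fun t => (hib t).1) ha,
          ← rowLabel_exists_iff i' (fun t => (hib' t).1) ha,
          ← support_fst (rowLabel I k i) (colLabel N I k i) σ a,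
          ← support_fst (rowLabel I k i') (colLabel N I k i') σ' a, ← hds, ← hds']
    · constructor
      · rintro ⟨t, rfl⟩
        exact absurd (hib t).1 (by omega)
      · rintro ⟨t, rfl⟩
        exact absurd (hib' t).1 (by omega)
  refine ⟨main, ?_⟩
  set g : (Fin k → Fin (N + 1)) → MvPolynomial (ℕ × ℕ) ℂ := fun j =>
    if j ∈ tupleSet N I k then (Amat N I k τ fun t => ((j t : ℕ))).det else 0 with hg
  have hmem : ∀ j ∈ tupleSet N I k, StrictMono (fun t => ((j t : ℕ))) ∧
      ∀ t, I + 1 ≤ (j t : ℕ) ∧ (j t : ℕ) ≤ N - I := by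
    intro j hj
    rw [tupleSet, Finset.mem_filter] at hj
    exact ⟨fun x y h => by exact_mod_cast hj.2.1 h, hj.2.2⟩
  have hgdisj : ∀ j j', j ≠ j' → Disjoint (g j).support (g j').support := by
    intro j j' hne
    by_cases hj : j ∈ tupleSet N I k
    · by_cases hj' : j' ∈ tupleSet N I k
      · rw [hg]; simp only [if_pos hj, if_pos hj']
        exact main _ _ (hmem j hj).1 (hmem j hj).2 (hmem j' hj').1 (hmem j' hj').2
          (fun h => hne (funext fun t => Fin.ext (congrFun h t)))
      · rw [hg]; simp [hj']
    · rw [hg]; simp [hj]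
  have hsum : mPoly N I k τ = ∑ j ∈ tupleSet N I k, g j := by
    rw [mPoly]
    exact Finset.sum_congr rfl fun j hj => by rw [hg]; simp [hj]
  have hsupp : (mPoly N I k τ).support = (tupleSet N I k).biUnion fun j => (g j).support := by
    rw [hsum]
    simp only [MvPolynomial.support, MvPolynomial, AddMonoidAlgebra.coeff_sum]
    exact Finsupp.support_sum_eq_biUnion _ hgdisj
  constructor
  · intro h0 i hi hib
    have hsupp0 : (tupleSet N I k).biUnion (fun j => (g j).support) = ∅ := by
      rw [← hsupp, h0, MvPolynomial.support_zero]
    set j : Fin k → Fin (N + 1) := fun t => ⟨i t, by have := (hib t).2; omega⟩ with hjdef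
    have hjmem : j ∈ tupleSet N I k := by
      rw [tupleSet, Finset.mem_filter]
      exact ⟨Finset.mem_univ _, fun x y h => Fin.mk_lt_mk.mpr (hi h), fun t => hib t⟩
    have hje : (fun t => ((j t : ℕ))) = i := rfl
    have hempty : (g j).support = ∅ :=
      Finset.subset_empty.mp (hsupp0 ▸ Finset.subset_biUnion_of_mem (fun j => (g j).support) hjmem)
    have : g j = 0 := MvPolynomial.support_eq_empty.mp hempty
    rw [hg] at this
    simp only [if_pos hjmem] at this
    rw [← hje]
    exact this
  · intro h
    rw [hsum]
    refine Finset.sum_eq_zero fun j hj => ?_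
    rw [hg]
    simp only [if_pos hj]
    exact h _ (hmem j hj).1 (hmem j hj).2
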